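/- arXiv:2006.05445 — 3 statements merged into one kernel-verified Lean document; each statement's English description precedes it below -/
import Mathlib

section
/- The matrix exponential mapping Q(Y) = exp(Y)/tr(exp(Y)) is 1-Lipschitz from the spectral norm to the nuclear norm on the space of traceless Hermitian matrices: ‖Q(Y) - Q(Y')‖₁ ≤ ‖Y - Y'‖_∞ for all Hermitian Y, Y' with tr Y = tr Y' = 0. -/
set_option linter.unusedSectionVars false


open scoped BigOperators ComplexOrder

/-- Von Neumann entropy h(Q) = tr(Q log Q) = sum of eigenvalue entropies (0 log 0 = 0). -/
noncomputable def vnEntropy {M : ℕ} (Q : Matrix (Fin M) (Fin M) ℂ) : ℝ :=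
  if hQ : Q.IsHermitian then ∑ i, hQ.eigenvalues i * Real.log (hQ.eigenvalues i) else 0

/-- Nuclear (trace) norm of a Hermitian matrix: sum of absolute values of eigenvalues. -/
noncomputable def nuclearNorm {M : ℕ} (Q : Matrix (Fin M) (Fin M) ℂ) : ℝ :=
  if hQ : Q.IsHermitian then ∑ i, |hQ.eigenvalues i| else 0

/-- Spectral norm of a Hermitian matrix: maximum absolute eigenvalue. -/
noncomputable def spectralNormHerm {M : ℕ} (Q : Matrix (Fin M) (Fin M) ℂ) : ℝ :=
  if hQ : Q.IsHermitian then ⨆ i, |hQ.eigenvalues i| else 0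

/-- The matrix exponential mapping Q(Y) = exp(Y)/tr(exp(Y)). -/
noncomputable def expMap {M : ℕ} (Y : Matrix (Fin M) (Fin M) ℂ) : Matrix (Fin M) (Fin M) ℂ :=
  ((NormedSpace.exp Y).trace)⁻¹ • NormedSpace.exp Y

section Helpers

open Matrix

variable {n : Type*} [Fintype n] [DecidableEq n]

private lemma trace_conj_diag (V : Matrix n n ℂ) (hV : star V * V = 1) (a : n → ℂ) :
    Matrix.trace (V * Matrix.diagonal a * star V) = ∑ i, a i := by
  rw [Matrix.trace_mul_cycle, hV, Matrix.one_mul, Matrix.trace_diagonal]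

private lemma trace_GDHD (G H : Matrix n n ℂ) (a b : n → ℂ) :
    Matrix.trace (G * Matrix.diagonal b * H * Matrix.diagonal a)
      = ∑ i, ∑ j, a i * b j * (G i j * H j i) := by
  rw [Matrix.trace]
  simp only [Matrix.diag_apply, Matrix.mul_apply, Matrix.diagonal_apply, mul_ite, ite_mul,
    mul_zero, zero_mul, Finset.sum_ite_eq, Finset.sum_ite_eq', Finset.mem_univ, if_true]
  refine Finset.sum_congr rfl fun i _ => ?_
  rw [Finset.sum_mul]
  refine Finset.sum_congr rfl fun j _ => ?_
  ring

private lemma trace_pair (V W : Matrix n n ℂ) (a b : n → ℝ) :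
    (Matrix.trace ((V * Matrix.diagonal (fun i => (a i : ℂ)) * star V) *
      (W * Matrix.diagonal (fun j => (b j : ℂ)) * star W))).re
      = ∑ i, ∑ j, a i * b j * Complex.normSq ((star V * W) i j) := by
  have h1 : (V * Matrix.diagonal (fun i => (a i : ℂ)) * star V) *
        (W * Matrix.diagonal (fun j => (b j : ℂ)) * star W)
      = (V * Matrix.diagonal (fun i => (a i : ℂ))) *
        (star V * (W * Matrix.diagonal (fun j => (b j : ℂ)) * star W)) := by
    noncomm_ring
  have h2 : (star V * (W * Matrix.diagonal (fun j => (b j : ℂ)) * star W)) *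
        (V * Matrix.diagonal (fun i => (a i : ℂ)))
      = (star V * W) * Matrix.diagonal (fun j => (b j : ℂ)) * (star W * V) *
        Matrix.diagonal (fun i => (a i : ℂ)) := by
    noncomm_ring
  rw [h1, Matrix.trace_mul_comm, h2, trace_GDHD]
  rw [Complex.re_sum]
  refine Finset.sum_congr rfl fun i _ => ?_
  rw [Complex.re_sum]
  refine Finset.sum_congr rfl fun j _ => ?_
  have h3 : (star W * V) j i = star ((star V * W) i j) := by
    rw [show star W * V = star (star V * W) by rw [Matrix.star_mul, star_star],
      Matrix.star_apply]
  rw [h3, Complex.star_def, Complex.mul_conj, ← Complex.ofReal_mul, ← Complex.ofReal_mul,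
    Complex.ofReal_re]

private lemma unitary_col_sum (P : Matrix n n ℂ) (hP : star P * P = 1) (i : n) :
    ∑ k, Complex.normSq (P k i) = 1 := by
  have h := congrFun (congrFun hP i) i
  rw [Matrix.mul_apply, Matrix.one_apply_eq] at h
  have : ∑ k, (Complex.normSq (P k i) : ℂ) = 1 := by
    rw [← h]
    refine Finset.sum_congr rfl fun k _ => ?_
    rw [Matrix.star_apply, Complex.star_def, mul_comm, Complex.mul_conj]
  exact_mod_cast this

private lemma unitary_row_sum (P : Matrix n n ℂ) (hP : P * star P = 1) (k : n) :
    ∑ i, Complex.normSq (P k i) = 1 := by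
  have h := congrFun (congrFun hP k) k
  rw [Matrix.mul_apply, Matrix.one_apply_eq] at h
  have : ∑ i, (Complex.normSq (P k i) : ℂ) = 1 := by
    rw [← h]
    refine Finset.sum_congr rfl fun i _ => ?_
    rw [Matrix.star_apply, Complex.star_def, Complex.mul_conj]
  exact_mod_cast this

private lemma entry_conj_diag (P : Matrix n n ℂ) (c : n → ℝ) (i : n) :
    ((star P * Matrix.diagonal (fun k => (c k : ℂ)) * P) i i).re
      = ∑ k, c k * Complex.normSq (P k i) := by
  rw [Matrix.mul_apply]
  rw [Complex.re_sum]
  refine Finset.sum_congr rfl fun k _ => ?_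
  rw [Matrix.mul_diagonal, Matrix.star_apply, Complex.star_def]
  have : (starRingEnd ℂ) (P k i) * (c k : ℂ) * P k i = ((c k * Complex.normSq (P k i) : ℝ) : ℂ) := by
    push_cast
    rw [← Complex.mul_conj]
    ring
  rw [this, Complex.ofReal_re]

private lemma conj_diag_isHermitian (V : Matrix n n ℂ) (a : n → ℝ) :
    (V * Matrix.diagonal (fun i => (a i : ℂ)) * star V).IsHermitian := by
  unfold Matrix.IsHermitian
  rw [Matrix.conjTranspose_mul, Matrix.conjTranspose_mul, Matrix.diagonal_conjTranspose]
  have : star (fun i => (a i : ℂ)) = fun i => (a i : ℂ) := by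
    funext i; simp [Pi.star_apply, Complex.star_def, Complex.conj_ofReal]
  rw [this]
  have hsVc : (star V)ᴴ = V := by
    rw [Matrix.star_eq_conjTranspose, Matrix.conjTranspose_conjTranspose]
  rw [hsVc, Matrix.star_eq_conjTranspose, Matrix.mul_assoc]

private lemma grid_mul_star (A B : Matrix n n ℂ) (hA : star A * A = 1) (hB : B * star B = 1) :
    (star A * B) * star (star A * B) = 1 := by
  rw [Matrix.star_mul, star_star, Matrix.mul_assoc, ← Matrix.mul_assoc B, hB, Matrix.one_mul, hA]

private lemma grid_star_mul (A B : Matrix n n ℂ) (hA : A * star A = 1) (hB : star B * B = 1) :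
    star (star A * B) * (star A * B) = 1 := by
  rw [Matrix.star_mul, star_star, Matrix.mul_assoc, ← Matrix.mul_assoc A, hA, Matrix.one_mul, hB]

private lemma normSq_swap (V W : Matrix n n ℂ) (i j : n) :
    Complex.normSq ((star W * V) j i) = Complex.normSq ((star V * W) i j) := by
  rw [show star W * V = star (star V * W) by rw [Matrix.star_mul, star_star],
    Matrix.star_apply, Complex.star_def, Complex.normSq_conj]

private lemma sum_normSq_one (a b : n → ℝ) :
    ∑ i, ∑ j, a i * b j * Complex.normSq ((1 : Matrix n n ℂ) i j) = ∑ i, a i * b i := by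
  refine Finset.sum_congr rfl fun i _ => ?_
  rw [Finset.sum_eq_single i]
  · rw [Matrix.one_apply_eq]; norm_num
  · intro j _ hji
    rw [Matrix.one_apply_ne (Ne.symm hji)]
    simp
  · intro h; exact absurd (Finset.mem_univ i) h

private lemma sgn_mul_self (x : ℝ) : Real.sign x * x = |x| := by
  rcases lt_trichotomy x 0 with h | h | h
  · rw [Real.sign_of_neg h, abs_of_neg h]; ring
  · simp [h]
  · rw [Real.sign_of_pos h, abs_of_pos h]; ring

private lemma sign_sq_le_one (x : ℝ) : Real.sign x * Real.sign x ≤ 1 := by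
  rcases lt_trichotomy x 0 with h | h | h
  · rw [Real.sign_of_neg h]; norm_num
  · simp [h, Real.sign_zero]
  · rw [Real.sign_of_pos h]; norm_num

private lemma key_log (x : ℝ) (hx : 1 ≤ x) : 2*(x-1)/(x+1) ≤ Real.log x := by
  set f : ℝ → ℝ := fun y => Real.log y + 4*(y+1)⁻¹ - 2 with hf
  have hderiv : ∀ y : ℝ, 0 < y → HasDerivAt f (y⁻¹ + 4*(-1/(y+1)^2)) y := by
    intro y hy
    have h1 : HasDerivAt (fun z : ℝ => z + 1) 1 y := (hasDerivAt_id y).add_const 1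
    have h2 : HasDerivAt (fun z : ℝ => (z+1)⁻¹) (-1/(y+1)^2) y := by
      exact h1.inv (by show y + 1 ≠ 0; positivity)
    exact ((Real.hasDerivAt_log hy.ne').add (h2.const_mul 4)).sub_const 2
  have hmono : MonotoneOn f (Set.Ici 1) := by
    refine monotoneOn_of_deriv_nonneg (convex_Ici 1) ?_ ?_ ?_
    · intro y hy
      have hy1 : (0:ℝ) < y := lt_of_lt_of_le one_pos hy
      exact (hderiv y hy1).continuousAt.continuousWithinAt
    · intro y hy
      rw [interior_Ici] at hy
      have hy1 : (0:ℝ) < y := lt_trans one_pos hy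
      exact (hderiv y hy1).differentiableAt.differentiableWithinAt
    · intro y hy
      rw [interior_Ici] at hy
      have hy1 : (0:ℝ) < y := lt_trans one_pos hy
      rw [(hderiv y hy1).deriv]
      have : y⁻¹ + 4*(-1/(y+1)^2) = ((y+1)^2 - 4*y)/(y * (y+1)^2) := by
        field_simp
        ring
      rw [this]
      have h4y : 0 ≤ (y+1)^2 - 4*y := by nlinarith [sq_nonneg (y-1)]
      exact div_nonneg h4y (by positivity)
  have h0 : f 1 ≤ f x := hmono (by simp) hx hx
  have hf1 : f 1 = 0 := by norm_num [hf]
  have hfx : f x = Real.log x + 4*(x+1)⁻¹ - 2 := rfl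
  rw [hf1, hfx] at h0
  have hx1 : (0:ℝ) < x + 1 := by linarith
  rw [div_le_iff₀ hx1]
  have h4 : 4*(x+1)⁻¹ = 4/(x+1) := by ring
  rw [h4] at h0
  rw [← sub_nonneg]
  have : Real.log x * (x+1) - 2*(x-1) = (Real.log x + 4/(x+1) - 2) * (x+1) := by
    field_simp
    ring
  rw [this]
  positivity

private lemma log_pinsker (p s : ℝ) (hp : 0 < p) (hs : 0 < s) :
    2*(p-s)^2/(p+s) ≤ (Real.log p - Real.log s)*(p-s) := by
  have main : ∀ a b : ℝ, 0 < a → 0 < b → b ≤ a →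
      2*(a-b)^2/(a+b) ≤ (Real.log a - Real.log b)*(a-b) := by
    intro a b ha hb hba
    have hx : 1 ≤ a/b := (one_le_div hb).2 hba
    have h1 := key_log (a/b) hx
    rw [Real.log_div ha.ne' hb.ne'] at h1
    have h2 : 2*(a/b-1)/(a/b+1) = 2*(a-b)/(a+b) := by
      rw [div_eq_div_iff (by positivity) (by positivity)]
      field_simp
    rw [h2] at h1
    have h3 := mul_le_mul_of_nonneg_right h1 (by linarith : (0:ℝ) ≤ a - b)
    calc 2*(a-b)^2/(a+b) = 2*(a-b)/(a+b) * (a-b) := by ring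
      _ ≤ (Real.log a - Real.log b)*(a-b) := h3
  rcases le_total s p with h | h
  · exact main p s hp hs h
  · have := main s p hs hp h
    calc 2*(p-s)^2/(p+s) = 2*(s-p)^2/(s+p) := by rw [show (p-s)^2 = (s-p)^2 by ring, add_comm]
      _ ≤ (Real.log s - Real.log p)*(s-p) := this
      _ = (Real.log p - Real.log s)*(p-s) := by ring

private lemma spectral_decomp {M : ℕ} (A : Matrix (Fin M) (Fin M) ℂ) (hA : A.IsHermitian) :
    A = (hA.eigenvectorUnitary : Matrix (Fin M) (Fin M) ℂ) *
      Matrix.diagonal (fun i => ((hA.eigenvalues i : ℝ) : ℂ)) *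
      star (hA.eigenvectorUnitary : Matrix (Fin M) (Fin M) ℂ) := by
  conv_lhs => rw [hA.spectral_theorem]
  have h : (RCLike.ofReal ∘ hA.eigenvalues : Fin M → ℂ) = fun i => ((hA.eigenvalues i : ℝ) : ℂ) := by
    funext i; norm_num
  rw [h]
  rw [Unitary.conjStarAlgAut_apply]

private lemma trace_mul_conj_diag {M : ℕ} (A V : Matrix (Fin M) (Fin M) ℂ) (p : Fin M → ℝ) :
    Matrix.trace (A * (V * Matrix.diagonal (fun i => (p i : ℂ)) * star V))
      = ∑ i, (p i : ℂ) * ((star V * A * V) i i) := by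
  have h1 : A * (V * Matrix.diagonal (fun i => (p i : ℂ)) * star V)
      = (A * V) * Matrix.diagonal (fun i => (p i : ℂ)) * star V := by noncomm_ring
  rw [h1, Matrix.trace_mul_cycle, ← Matrix.mul_assoc]
  rw [Matrix.trace]
  refine Finset.sum_congr rfl fun i _ => ?_
  rw [Matrix.diag_apply, Matrix.mul_diagonal, Matrix.mul_assoc]
  ring

private lemma expMap_decomp {M : ℕ} (Y : Matrix (Fin M) (Fin M) ℂ) (hY : Y.IsHermitian) :
    expMap Y = (hY.eigenvectorUnitary : Matrix (Fin M) (Fin M) ℂ) *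
      Matrix.diagonal (fun i => ((Real.exp (hY.eigenvalues i) /
        (∑ k, Real.exp (hY.eigenvalues k)) : ℝ) : ℂ)) *
      star (hY.eigenvectorUnitary : Matrix (Fin M) (Fin M) ℂ) := by
  set V : Matrix (Fin M) (Fin M) ℂ := (hY.eigenvectorUnitary : Matrix (Fin M) (Fin M) ℂ) with hVdef
  have hV1 : star V * V = 1 := Matrix.mem_unitaryGroup_iff'.mp hY.eigenvectorUnitary.2
  have hV2 : V * star V = 1 := Matrix.mem_unitaryGroup_iff.mp hY.eigenvectorUnitary.2
  have hUnit : IsUnit V := ⟨⟨V, star V, hV2, hV1⟩, rfl⟩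
  have hinv : V⁻¹ = star V := Matrix.inv_eq_left_inv hV1
  have hexp : NormedSpace.exp Y =
      V * Matrix.diagonal (fun i => (Complex.exp (hY.eigenvalues i) : ℂ)) * star V := by
    conv_lhs => rw [spectral_decomp Y hY]
    rw [← hinv, Matrix.exp_conj V _ hUnit, Matrix.exp_diagonal, hinv, Pi.exp_def]
    congr 2
    funext i
    rw [← Complex.exp_eq_exp_ℂ]
  have htr : (NormedSpace.exp Y).trace
      = ((∑ k, Real.exp (hY.eigenvalues k) : ℝ) : ℂ) := by
    rw [hexp, trace_conj_diag V hV1]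
    push_cast [Complex.ofReal_exp]
    rfl
  rw [expMap, htr, hexp, ← Matrix.smul_mul, ← Matrix.mul_smul, ← Matrix.diagonal_smul]
  have hfun : ((((∑ k, Real.exp (hY.eigenvalues k) : ℝ)) : ℂ))⁻¹ •
        (fun i => Complex.exp ((hY.eigenvalues i : ℝ) : ℂ))
      = fun i => ((Real.exp (hY.eigenvalues i) /
          (∑ k, Real.exp (hY.eigenvalues k)) : ℝ) : ℂ) := by
    funext i
    rw [Pi.smul_apply, Complex.ofReal_div, ← Complex.ofReal_exp, smul_eq_mul]
    ring
  rw [hfun]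

end Helpers

/-- The matrix exponential mapping Q(Y) = exp(Y)/tr(exp Y) is 1-Lipschitz from the
spectral norm to the nuclear norm on traceless Hermitian matrices. -/
theorem expMap_lipschitz (M : ℕ) (Y Y' : Matrix (Fin M) (Fin M) ℂ)
    (hY : Y.IsHermitian) (hY' : Y'.IsHermitian)
    (hYtr : Y.trace = 0) (hY'tr : Y'.trace = 0) :
    nuclearNorm (expMap Y - expMap Y') ≤ spectralNormHerm (Y - Y') := by
  rcases Nat.eq_zero_or_pos M with hM | hM
  · subst hM
    have h1 : nuclearNorm (expMap Y - expMap Y') = 0 := by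
      unfold nuclearNorm
      split <;> simp
    have h2 : spectralNormHerm (Y - Y') = 0 := by
      unfold spectralNormHerm
      split <;> simp [iSup_of_empty', Real.sSup_empty]
    rw [h1, h2]
  -- main case
  set lam := hY.eigenvalues with hlam_def
  set mu := hY'.eigenvalues with hmu_def
  set V : Matrix (Fin M) (Fin M) ℂ := (hY.eigenvectorUnitary : Matrix (Fin M) (Fin M) ℂ)
  set W : Matrix (Fin M) (Fin M) ℂ := (hY'.eigenvectorUnitary : Matrix (Fin M) (Fin M) ℂ)
  have hV1 : star V * V = 1 := Matrix.mem_unitaryGroup_iff'.mp hY.eigenvectorUnitary.2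
  have hV2 : V * star V = 1 := Matrix.mem_unitaryGroup_iff.mp hY.eigenvectorUnitary.2
  have hW1 : star W * W = 1 := Matrix.mem_unitaryGroup_iff'.mp hY'.eigenvectorUnitary.2
  have hW2 : W * star W = 1 := Matrix.mem_unitaryGroup_iff.mp hY'.eigenvectorUnitary.2
  set Z : ℝ := ∑ k, Real.exp (lam k) with hZ_def
  set Z' : ℝ := ∑ k, Real.exp (mu k) with hZ'_def
  have hZ : 0 < Z := Finset.sum_pos (fun k _ => Real.exp_pos _) ⟨⟨0, hM⟩, Finset.mem_univ _⟩
  have hZ' : 0 < Z' := Finset.sum_pos (fun k _ => Real.exp_pos _) ⟨⟨0, hM⟩, Finset.mem_univ _⟩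
  set p : Fin M → ℝ := fun i => Real.exp (lam i) / Z with hp_def
  set s : Fin M → ℝ := fun j => Real.exp (mu j) / Z' with hs_def
  have hp : ∀ i, 0 < p i := fun i => div_pos (Real.exp_pos _) hZ
  have hs : ∀ j, 0 < s j := fun j => div_pos (Real.exp_pos _) hZ'
  have hp1 : ∑ i, p i = 1 := by rw [hp_def, ← Finset.sum_div, ← hZ_def, div_self hZ.ne']
  have hs1 : ∑ j, s j = 1 := by rw [hs_def, ← Finset.sum_div, ← hZ'_def, div_self hZ'.ne']
  have hlogp : ∀ i, Real.log (p i) = lam i - Real.log Z := by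
    intro i
    rw [hp_def, Real.log_div (Real.exp_pos _).ne' hZ.ne', Real.log_exp]
  have hlogs : ∀ j, Real.log (s j) = mu j - Real.log Z' := by
    intro j
    rw [hs_def, Real.log_div (Real.exp_pos _).ne' hZ'.ne', Real.log_exp]
  have hrho : expMap Y = V * Matrix.diagonal (fun i => (p i : ℂ)) * star V := expMap_decomp Y hY
  have hsig : expMap Y' = W * Matrix.diagonal (fun j => (s j : ℂ)) * star W := expMap_decomp Y' hY'
  have hYdec : Y = V * Matrix.diagonal (fun i => ((lam i : ℝ) : ℂ)) * star V :=
    spectral_decomp Y hY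
  have hY'dec : Y' = W * Matrix.diagonal (fun j => ((mu j : ℝ) : ℂ)) * star W :=
    spectral_decomp Y' hY'
  have hC : (Y - Y').IsHermitian := hY.sub hY'
  set e := hC.eigenvalues with he_def
  set X : Matrix (Fin M) (Fin M) ℂ := (hC.eigenvectorUnitary : Matrix (Fin M) (Fin M) ℂ)
  have hX1 : star X * X = 1 := Matrix.mem_unitaryGroup_iff'.mp hC.eigenvectorUnitary.2
  have hX2 : X * star X = 1 := Matrix.mem_unitaryGroup_iff.mp hC.eigenvectorUnitary.2
  have hCdec : Y - Y' = X * Matrix.diagonal (fun l => ((e l : ℝ) : ℂ)) * star X :=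
    spectral_decomp _ hC
  have hD : (expMap Y - expMap Y').IsHermitian := by
    rw [hrho, hsig]
    exact (conj_diag_isHermitian V p).sub (conj_diag_isHermitian W s)
  set d := hD.eigenvalues with hd_def
  set U : Matrix (Fin M) (Fin M) ℂ := (hD.eigenvectorUnitary : Matrix (Fin M) (Fin M) ℂ)
  have hU1 : star U * U = 1 := Matrix.mem_unitaryGroup_iff'.mp hD.eigenvectorUnitary.2
  have hU2 : U * star U = 1 := Matrix.mem_unitaryGroup_iff.mp hD.eigenvectorUnitary.2
  have hDdec : expMap Y - expMap Y' = U * Matrix.diagonal (fun k => ((d k : ℝ) : ℂ)) * star U :=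
    spectral_decomp _ hD
  set N : ℝ := ∑ k, |d k| with hN_def
  set S : ℝ := ⨆ l, |e l| with hS_def
  have hN0 : 0 ≤ N := Finset.sum_nonneg fun k _ => abs_nonneg _
  have hS_ge : ∀ l, |e l| ≤ S := by
    intro l
    rw [hS_def]
    exact le_ciSup (f := fun l => |e l|) (Set.Finite.bddAbove (Set.finite_range _)) l
  have hS0 : 0 ≤ S := le_trans (abs_nonneg _) (hS_ge ⟨0, hM⟩)
  -- reduce goal
  have hgoal : nuclearNorm (expMap Y - expMap Y') = N := by
    unfold nuclearNorm
    rw [dif_pos hD]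
  have hgoal2 : spectralNormHerm (Y - Y') = S := by
    unfold spectralNormHerm
    rw [dif_pos hC]
  rw [hgoal, hgoal2]
  -- the grid
  set m : Fin M → Fin M → ℝ := fun i j => Complex.normSq ((star V * W) i j) with hm_def
  have hm0 : ∀ i j, 0 ≤ m i j := fun i j => Complex.normSq_nonneg _
  have hmrow : ∀ i, ∑ j, m i j = 1 := fun i =>
    unitary_row_sum (star V * W) (grid_mul_star V W hV1 hW2) i
  have hmcol : ∀ j, ∑ i, m i j = 1 := fun j =>
    unitary_col_sum (star V * W) (grid_star_mul V W hV2 hW1) j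
  -- Step 1 : trace identity
  have hT1 : (Matrix.trace ((Y - Y') * (expMap Y - expMap Y'))).re
      = ∑ i, ∑ j, m i j * ((lam i - mu j) * (p i - s j)) := by
    have t11 : (Matrix.trace (Y * expMap Y)).re = ∑ i, lam i * p i := by
      rw [hrho, hYdec, trace_pair V V lam p, hV1, sum_normSq_one]
    have t12 : (Matrix.trace (Y * expMap Y')).re = ∑ i, ∑ j, lam i * s j * m i j := by
      rw [hsig, hYdec]
      exact trace_pair V W lam s
    have t21 : (Matrix.trace (Y' * expMap Y)).re = ∑ i, ∑ j, mu j * p i * m i j := by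
      rw [hrho, hY'dec, trace_pair W V mu p, Finset.sum_comm]
      refine Finset.sum_congr rfl fun i _ => Finset.sum_congr rfl fun j _ => ?_
      rw [hm_def, normSq_swap]
    have t22 : (Matrix.trace (Y' * expMap Y')).re = ∑ j, mu j * s j := by
      rw [hsig, hY'dec, trace_pair W W mu s, hW1, sum_normSq_one]
    have hsplit : (Matrix.trace ((Y - Y') * (expMap Y - expMap Y'))).re
        = (Matrix.trace (Y * expMap Y)).re - (Matrix.trace (Y * expMap Y')).re
          - (Matrix.trace (Y' * expMap Y)).re + (Matrix.trace (Y' * expMap Y')).re := by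
      rw [sub_mul, mul_sub, mul_sub, Matrix.trace_sub, Matrix.trace_sub, Matrix.trace_sub,
        Complex.sub_re, Complex.sub_re, Complex.sub_re]
      ring
    have hA : ∑ i, ∑ j, lam i * p i * m i j = ∑ i, lam i * p i :=
      Finset.sum_congr rfl fun i _ => by rw [← Finset.mul_sum, hmrow i, mul_one]
    have hB : ∑ i, ∑ j, mu j * s j * m i j = ∑ j, mu j * s j := by
      rw [Finset.sum_comm]
      exact Finset.sum_congr rfl fun j _ => by rw [← Finset.mul_sum, hmcol j, mul_one]
    rw [hsplit, t11, t12, t21, t22, ← hA, ← hB]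
    simp only [← Finset.sum_sub_distrib, ← Finset.sum_add_distrib]
    exact Finset.sum_congr rfl fun i _ => Finset.sum_congr rfl fun j _ => by ring
  -- Step 2 : log substitution
  have hT2 : ∑ i, ∑ j, m i j * ((lam i - mu j) * (p i - s j))
      = ∑ i, ∑ j, m i j * ((Real.log (p i) - Real.log (s j)) * (p i - s j)) := by
    have key0 : ∑ i, ∑ j, m i j * (p i - s j) = 0 := by
      have h1 : ∑ i, ∑ j, m i j * p i = 1 := by
        calc ∑ i, ∑ j, m i j * p i = ∑ i, p i :=
            Finset.sum_congr rfl fun i _ => by rw [← Finset.sum_mul, hmrow i, one_mul]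
          _ = 1 := hp1
      have h2 : ∑ i, ∑ j, m i j * s j = 1 := by
        rw [Finset.sum_comm]
        calc ∑ j, ∑ i, m i j * s j = ∑ j, s j :=
            Finset.sum_congr rfl fun j _ => by rw [← Finset.sum_mul, hmcol j, one_mul]
          _ = 1 := hs1
      calc ∑ i, ∑ j, m i j * (p i - s j)
          = ∑ i, ∑ j, (m i j * p i - m i j * s j) :=
            Finset.sum_congr rfl fun i _ => Finset.sum_congr rfl fun j _ => by ring
        _ = (∑ i, ∑ j, m i j * p i) - ∑ i, ∑ j, m i j * s j := by
            simp only [Finset.sum_sub_distrib]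
        _ = 0 := by rw [h1, h2, sub_self]
    have hsub : ∀ i j, m i j * ((lam i - mu j) * (p i - s j))
        = m i j * ((Real.log (p i) - Real.log (s j)) * (p i - s j))
          + (Real.log Z - Real.log Z') * (m i j * (p i - s j)) := by
      intro i j
      have h : lam i - mu j = (Real.log (p i) - Real.log (s j)) + (Real.log Z - Real.log Z') := by
        rw [hlogp i, hlogs j]; ring
      rw [h]; ring
    calc ∑ i, ∑ j, m i j * ((lam i - mu j) * (p i - s j))
        = ∑ i, ∑ j, (m i j * ((Real.log (p i) - Real.log (s j)) * (p i - s j))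
            + (Real.log Z - Real.log Z') * (m i j * (p i - s j))) :=
          Finset.sum_congr rfl fun i _ => Finset.sum_congr rfl fun j _ => hsub i j
      _ = (∑ i, ∑ j, m i j * ((Real.log (p i) - Real.log (s j)) * (p i - s j)))
            + (Real.log Z - Real.log Z') * ∑ i, ∑ j, m i j * (p i - s j) := by
          simp only [Finset.sum_add_distrib, ← Finset.mul_sum]
      _ = ∑ i, ∑ j, m i j * ((Real.log (p i) - Real.log (s j)) * (p i - s j)) := by
          rw [key0, mul_zero, add_zero]
  -- Step 3 : termwise Pinsker bound
  set F : ℝ := ∑ i, ∑ j, m i j * ((p i - s j)^2 / (p i + s j)) with hF_def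
  have hF0 : 0 ≤ F := by
    refine Finset.sum_nonneg fun i _ => Finset.sum_nonneg fun j _ => ?_
    exact mul_nonneg (hm0 i j) (div_nonneg (sq_nonneg _) (add_pos (hp i) (hs j)).le)
  have hT3 : 2 * F ≤ ∑ i, ∑ j, m i j * ((Real.log (p i) - Real.log (s j)) * (p i - s j)) := by
    have h2F : 2 * F = ∑ i, ∑ j, m i j * (2*(p i - s j)^2/(p i + s j)) := by
      rw [hF_def, Finset.mul_sum]
      refine Finset.sum_congr rfl fun i _ => ?_
      rw [Finset.mul_sum]
      exact Finset.sum_congr rfl fun j _ => by ring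
    rw [h2F]
    refine Finset.sum_le_sum fun i _ => Finset.sum_le_sum fun j _ => ?_
    exact mul_le_mul_of_nonneg_left (log_pinsker (p i) (s j) (hp i) (hs j)) (hm0 i j)
  -- Step 4 : Cauchy-Schwarz: N^2 ≤ 2F
  have hT4 : N^2 ≤ 2 * F := by
    set sg : Fin M → ℝ := fun k => Real.sign (d k) with hsg_def
    set A : Matrix (Fin M) (Fin M) ℂ :=
      U * Matrix.diagonal (fun k => ((sg k : ℝ) : ℂ)) * star U with hA_def
    have hAH : star A = A := by
      rw [Matrix.star_eq_conjTranspose]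
      exact conj_diag_isHermitian U sg
    set G : Matrix (Fin M) (Fin M) ℂ := star V * W with hG_def
    set H : Matrix (Fin M) (Fin M) ℂ := star V * A * W with hH_def
    -- (i) N as a trace against the sign matrix
    have hNA : (Matrix.trace (A * (expMap Y - expMap Y'))).re = N := by
      rw [hDdec, hA_def, trace_pair U U sg d, hU1, sum_normSq_one, hN_def]
      exact Finset.sum_congr rfl fun k _ => sgn_mul_self (d k)
    -- (ii) matrix identities
    have hVAV : star V * A * V = H * star G := by
      have h1 : H * star G = star V * A * (W * star W) * V := by
        rw [hH_def, hG_def, Matrix.star_mul, star_star]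
        noncomm_ring
      rw [h1, hW2, Matrix.mul_one]
    have hWAW : star W * A * W = star G * H := by
      have h1 : star G * H = star W * (V * star V) * A * W := by
        rw [hH_def, hG_def, Matrix.star_mul, star_star]
        noncomm_ring
      rw [h1, hV2, Matrix.mul_one]
    -- (ii') N as a grid sum
    have htrA1 : (Matrix.trace (A * expMap Y)).re
        = ∑ i, ∑ j, ((starRingEnd ℂ) (G i j) * H i j).re * p i := by
      rw [hrho, trace_mul_conj_diag A V p, Complex.re_sum]
      refine Finset.sum_congr rfl fun i _ => ?_
      rw [Complex.re_ofReal_mul, hVAV, Matrix.mul_apply, Complex.re_sum, Finset.mul_sum]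
      refine Finset.sum_congr rfl fun j _ => ?_
      have h5 : H i j * (star G) j i = (starRingEnd ℂ) (G i j) * H i j := by
        rw [Matrix.star_apply, Complex.star_def]; ring
      rw [h5]; ring
    have htrA2 : (Matrix.trace (A * expMap Y')).re
        = ∑ j, ∑ i, ((starRingEnd ℂ) (G i j) * H i j).re * s j := by
      rw [hsig, trace_mul_conj_diag A W s, Complex.re_sum]
      refine Finset.sum_congr rfl fun j _ => ?_
      rw [Complex.re_ofReal_mul, hWAW, Matrix.mul_apply, Complex.re_sum, Finset.mul_sum]
      refine Finset.sum_congr rfl fun i _ => ?_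
      have h5 : (star G) j i * H i j = (starRingEnd ℂ) (G i j) * H i j := by
        rw [Matrix.star_apply, Complex.star_def]
      rw [h5]; ring
    have hNgrid : N = ∑ i, ∑ j, ((starRingEnd ℂ) (G i j) * H i j).re * (p i - s j) := by
      have h6 : (Matrix.trace (A * (expMap Y - expMap Y'))).re
          = (Matrix.trace (A * expMap Y)).re - (Matrix.trace (A * expMap Y')).re := by
        rw [mul_sub, Matrix.trace_sub, Complex.sub_re]
      rw [← hNA, h6, htrA1, htrA2, Finset.sum_comm (f := fun j i => ((starRingEnd ℂ) (G i j) * H i j).re * s j)]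
      simp only [← Finset.sum_sub_distrib]
      exact Finset.sum_congr rfl fun i _ => Finset.sum_congr rfl fun j _ => by ring
    -- (iii) bound by absolute values
    have hNle : N ≤ ∑ i, ∑ j, ‖G i j‖ * ‖H i j‖ * |p i - s j| := by
      rw [hNgrid]
      refine Finset.sum_le_sum fun i _ => Finset.sum_le_sum fun j _ => ?_
      calc ((starRingEnd ℂ) (G i j) * H i j).re * (p i - s j)
          ≤ |((starRingEnd ℂ) (G i j) * H i j).re * (p i - s j)| := le_abs_self _
        _ = |((starRingEnd ℂ) (G i j) * H i j).re| * |p i - s j| := abs_mul _ _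
        _ ≤ ‖(starRingEnd ℂ) (G i j) * H i j‖ * |p i - s j| :=
            mul_le_mul_of_nonneg_right (Complex.abs_re_le_norm _) (abs_nonneg _)
        _ = ‖G i j‖ * ‖H i j‖ * |p i - s j| := by
            rw [norm_mul, Complex.norm_conj]
    have hN'0 : 0 ≤ ∑ i, ∑ j, ‖G i j‖ * ‖H i j‖ * |p i - s j| :=
      Finset.sum_nonneg fun i _ => Finset.sum_nonneg fun j _ => by positivity
    -- (iv) Cauchy-Schwarz
    have hCS : (∑ i, ∑ j, ‖G i j‖ * ‖H i j‖ * |p i - s j|)^2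
        ≤ F * (∑ i, ∑ j, Complex.normSq (H i j) * (p i + s j)) := by
      have e1 : ∀ (i j : Fin M),
          (‖G i j‖ * |p i - s j| / Real.sqrt (p i + s j)) *
            (‖H i j‖ * Real.sqrt (p i + s j))
          = ‖G i j‖ * ‖H i j‖ * |p i - s j| := by
        intro i j
        have hx : Real.sqrt (p i + s j) ≠ 0 := (Real.sqrt_pos.2 (add_pos (hp i) (hs j))).ne'
        field_simp
      have e2 : ∀ (i j : Fin M),
          (‖G i j‖ * |p i - s j| / Real.sqrt (p i + s j))^2
          = m i j * ((p i - s j)^2/(p i + s j)) := by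
        intro i j
        rw [div_pow, mul_pow, Complex.sq_norm, sq_abs, Real.sq_sqrt (add_pos (hp i) (hs j)).le,
          hm_def, hG_def]
        ring
      have e3 : ∀ (i j : Fin M),
          (‖H i j‖ * Real.sqrt (p i + s j))^2
          = Complex.normSq (H i j) * (p i + s j) := by
        intro i j
        rw [mul_pow, Complex.sq_norm, Real.sq_sqrt (add_pos (hp i) (hs j)).le]
      calc (∑ i, ∑ j, ‖G i j‖ * ‖H i j‖ * |p i - s j|)^2
          = (∑ z : Fin M × Fin M, (‖G z.1 z.2‖ * |p z.1 - s z.2| /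
              Real.sqrt (p z.1 + s z.2)) * (‖H z.1 z.2‖ *
              Real.sqrt (p z.1 + s z.2)))^2 := by
            rw [Fintype.sum_prod_type]
            congr 1
            exact Finset.sum_congr rfl fun i _ => Finset.sum_congr rfl fun j _ => (e1 i j).symm
        _ ≤ (∑ z : Fin M × Fin M, (‖G z.1 z.2‖ * |p z.1 - s z.2| /
              Real.sqrt (p z.1 + s z.2))^2) * (∑ z : Fin M × Fin M, (‖H z.1 z.2‖ *
              Real.sqrt (p z.1 + s z.2))^2) :=
            Finset.sum_mul_sq_le_sq_mul_sq Finset.univ _ _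
        _ = F * (∑ i, ∑ j, Complex.normSq (H i j) * (p i + s j)) := by
            rw [Fintype.sum_prod_type, Fintype.sum_prod_type, hF_def]
            congr 1
            · exact Finset.sum_congr rfl fun i _ => Finset.sum_congr rfl fun j _ => e2 i j
            · exact Finset.sum_congr rfl fun i _ => Finset.sum_congr rfl fun j _ => e3 i j
    -- (v) the H-sum is at most 2
    have hAA : A * A = U * Matrix.diagonal (fun k => ((sg k * sg k : ℝ) : ℂ)) * star U := by
      rw [hA_def]
      calc (U * Matrix.diagonal (fun k => ((sg k : ℝ) : ℂ)) * star U) *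
            (U * Matrix.diagonal (fun k => ((sg k : ℝ) : ℂ)) * star U)
          = U * (Matrix.diagonal (fun k => ((sg k : ℝ) : ℂ)) * (star U * U) *
              Matrix.diagonal (fun k => ((sg k : ℝ) : ℂ))) * star U := by noncomm_ring
        _ = U * (Matrix.diagonal (fun k => ((sg k : ℝ) : ℂ)) *
              Matrix.diagonal (fun k => ((sg k : ℝ) : ℂ))) * star U := by
            rw [hU1, Matrix.mul_one]
        _ = U * Matrix.diagonal (fun k => ((sg k * sg k : ℝ) : ℂ)) * star U := by
            rw [Matrix.diagonal_mul_diagonal]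
            congr 2
            funext k
            push_cast
            ring
    have hHrow : ∀ i, ∑ j, Complex.normSq (H i j) ≤ 1 := by
      intro i
      have h1 : ((H * star H) i i).re = ∑ j, Complex.normSq (H i j) := by
        rw [Matrix.mul_apply, Complex.re_sum]
        refine Finset.sum_congr rfl fun j _ => ?_
        rw [Matrix.star_apply, Complex.star_def, Complex.mul_conj, Complex.ofReal_re]
      have h2 : H * star H = star V * (A * A) * V := by
        rw [hH_def, Matrix.star_mul, Matrix.star_mul, star_star, hAH]
        calc (star V * A * W) * (star W * (A * V))
            = star V * A * (W * star W) * (A * V) := by noncomm_ring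
          _ = star V * A * (A * V) := by rw [hW2, Matrix.mul_one]
          _ = star V * (A * A) * V := by noncomm_ring
      have h3 : ((H * star H) i i).re
          = ∑ k, (sg k * sg k) * Complex.normSq ((star U * V) k i) := by
        rw [h2, hAA]
        have h4 : star V * (U * Matrix.diagonal (fun k => ((sg k * sg k : ℝ) : ℂ)) * star U) * V
            = star (star U * V) * Matrix.diagonal (fun k => ((sg k * sg k : ℝ) : ℂ)) *
              (star U * V) := by
          rw [Matrix.star_mul, star_star]
          noncomm_ring
        rw [h4, entry_conj_diag]
      rw [← h1, h3]
      calc ∑ k, (sg k * sg k) * Complex.normSq ((star U * V) k i)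
          ≤ ∑ k, Complex.normSq ((star U * V) k i) := by
            refine Finset.sum_le_sum fun k _ => ?_
            calc (sg k * sg k) * Complex.normSq ((star U * V) k i)
                ≤ 1 * Complex.normSq ((star U * V) k i) :=
                  mul_le_mul_of_nonneg_right (sign_sq_le_one (d k)) (Complex.normSq_nonneg _)
              _ = Complex.normSq ((star U * V) k i) := one_mul _
        _ = 1 := unitary_col_sum _ (grid_star_mul U V hU2 hV1) i
    have hHcol : ∀ j, ∑ i, Complex.normSq (H i j) ≤ 1 := by
      intro j
      have h1 : ((star H * H) j j).re = ∑ i, Complex.normSq (H i j) := by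
        rw [Matrix.mul_apply, Complex.re_sum]
        refine Finset.sum_congr rfl fun i _ => ?_
        rw [Matrix.star_apply, Complex.star_def, mul_comm, Complex.mul_conj, Complex.ofReal_re]
      have h2 : star H * H = star W * (A * A) * W := by
        rw [hH_def, Matrix.star_mul, Matrix.star_mul, star_star, hAH]
        calc (star W * (A * V)) * (star V * A * W)
            = star W * A * (V * star V) * (A * W) := by noncomm_ring
          _ = star W * A * (A * W) := by rw [hV2, Matrix.mul_one]
          _ = star W * (A * A) * W := by noncomm_ring
      have h3 : ((star H * H) j j).re
          = ∑ k, (sg k * sg k) * Complex.normSq ((star U * W) k j) := by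
        rw [h2, hAA]
        have h4 : star W * (U * Matrix.diagonal (fun k => ((sg k * sg k : ℝ) : ℂ)) * star U) * W
            = star (star U * W) * Matrix.diagonal (fun k => ((sg k * sg k : ℝ) : ℂ)) *
              (star U * W) := by
          rw [Matrix.star_mul, star_star]
          noncomm_ring
        rw [h4, entry_conj_diag]
      rw [← h1, h3]
      calc ∑ k, (sg k * sg k) * Complex.normSq ((star U * W) k j)
          ≤ ∑ k, Complex.normSq ((star U * W) k j) := by
            refine Finset.sum_le_sum fun k _ => ?_
            calc (sg k * sg k) * Complex.normSq ((star U * W) k j)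
                ≤ 1 * Complex.normSq ((star U * W) k j) :=
                  mul_le_mul_of_nonneg_right (sign_sq_le_one (d k)) (Complex.normSq_nonneg _)
              _ = Complex.normSq ((star U * W) k j) := one_mul _
        _ = 1 := unitary_col_sum _ (grid_star_mul U W hU2 hW1) j
    have hSH : ∑ i, ∑ j, Complex.normSq (H i j) * (p i + s j) ≤ 2 := by
      have hsplit : ∑ i, ∑ j, Complex.normSq (H i j) * (p i + s j)
          = (∑ i, ∑ j, Complex.normSq (H i j) * p i)
            + ∑ i, ∑ j, Complex.normSq (H i j) * s j := by
        simp only [mul_add, Finset.sum_add_distrib]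
      rw [hsplit]
      have hL : ∑ i, ∑ j, Complex.normSq (H i j) * p i ≤ 1 := by
        calc ∑ i, ∑ j, Complex.normSq (H i j) * p i
            = ∑ i, (∑ j, Complex.normSq (H i j)) * p i := by
              refine Finset.sum_congr rfl fun i _ => ?_
              rw [Finset.sum_mul]
          _ ≤ ∑ i, 1 * p i :=
              Finset.sum_le_sum fun i _ => mul_le_mul_of_nonneg_right (hHrow i) (hp i).le
          _ = 1 := by simp only [one_mul]; exact hp1
      have hR : ∑ i, ∑ j, Complex.normSq (H i j) * s j ≤ 1 := by
        rw [Finset.sum_comm]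
        calc ∑ j, ∑ i, Complex.normSq (H i j) * s j
            = ∑ j, (∑ i, Complex.normSq (H i j)) * s j := by
              refine Finset.sum_congr rfl fun j _ => ?_
              rw [Finset.sum_mul]
          _ ≤ ∑ j, 1 * s j :=
              Finset.sum_le_sum fun j _ => mul_le_mul_of_nonneg_right (hHcol j) (hs j).le
          _ = 1 := by simp only [one_mul]; exact hs1
      linarith
    -- combine
    calc N^2 ≤ (∑ i, ∑ j, ‖G i j‖ * ‖H i j‖ * |p i - s j|)^2 :=
          pow_le_pow_left₀ hN0 hNle 2
      _ ≤ F * (∑ i, ∑ j, Complex.normSq (H i j) * (p i + s j)) := hCS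
      _ ≤ F * 2 := mul_le_mul_of_nonneg_left hSH hF0
      _ = 2 * F := mul_comm _ _
  -- Step 5 : Hoelder bound
  have hT5 : (Matrix.trace ((Y - Y') * (expMap Y - expMap Y'))).re ≤ S * N := by
    rw [hCdec, hDdec, trace_pair X U e d]
    have hcol : ∀ k, ∑ l, Complex.normSq ((star X * U) l k) = 1 := fun k =>
      unitary_col_sum _ (grid_star_mul X U hX2 hU1) k
    calc ∑ l, ∑ k, e l * d k * Complex.normSq ((star X * U) l k)
        ≤ ∑ l, ∑ k, S * (|d k| * Complex.normSq ((star X * U) l k)) := by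
          refine Finset.sum_le_sum fun l _ => Finset.sum_le_sum fun k _ => ?_
          have h1 : e l * d k ≤ S * |d k| :=
            calc e l * d k ≤ |e l * d k| := le_abs_self _
              _ = |e l| * |d k| := abs_mul _ _
              _ ≤ S * |d k| := mul_le_mul_of_nonneg_right (hS_ge l) (abs_nonneg _)
          calc e l * d k * Complex.normSq ((star X * U) l k)
              ≤ S * |d k| * Complex.normSq ((star X * U) l k) :=
                mul_le_mul_of_nonneg_right h1 (Complex.normSq_nonneg _)
            _ = S * (|d k| * Complex.normSq ((star X * U) l k)) := by ring
      _ = S * N := by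
          simp only [← Finset.mul_sum]
          congr 1
          rw [Finset.sum_comm, hN_def]
          refine Finset.sum_congr rfl fun k _ => ?_
          rw [← Finset.mul_sum, hcol k, mul_one]
  -- combine
  have hchain : N^2 ≤ S * N := by
    calc N^2 ≤ 2*F := hT4
      _ ≤ ∑ i, ∑ j, m i j * ((Real.log (p i) - Real.log (s j)) * (p i - s j)) := hT3
      _ = (Matrix.trace ((Y - Y') * (expMap Y - expMap Y'))).re := by rw [hT1, hT2]
      _ ≤ S * N := hT5
  rcases hN0.eq_or_lt with h | h
  · rw [← h]; exact hS0
  · have : N * N ≤ S * N := by rw [← sq]; exact hchain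
    exact le_of_mul_le_mul_right this h
end

section
/- Fix δ with 0 < δ < r where r = 1/√(M(M-1)), let Q be in the spectrahedron C of unit-trace PSD Hermitian M×M matrices, and let Z be a traceless Hermitian matrix with ‖Z‖_F = 1. Then the adjusted query point Q̂ = Q + (δ/r)(I/M - Q) + δZ lies in C. -/
open scoped BigOperators ComplexOrder

/-- Frobenius norm of a complex matrix. -/
noncomputable def frobNorm {M : ℕ} (Q : Matrix (Fin M) (Fin M) ℂ) : ℝ :=
  Real.sqrt (∑ i, ∑ j, ‖Q i j‖ ^ 2)

open Matrix in
lemma psd_csmul {n : ℕ} {A : Matrix (Fin n) (Fin n) ℂ} (hA : A.PosSemidef)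
    {c : ℝ} (hc : 0 ≤ c) : ((c : ℂ) • A).PosSemidef := by
  constructor
  · unfold Matrix.IsHermitian
    rw [conjTranspose_smul, hA.1.eq]
    congr 1
    simp
  · intro x
    exact (hA.smul (show (0:ℂ) ≤ (c:ℂ) by exact_mod_cast hc)).2 x

lemma eig_bound {M : ℕ} (hM : 2 ≤ M) (lam : Fin M → ℝ) (h0 : ∑ i, lam i = 0)
    (h1 : ∑ i, lam i ^ 2 = 1) (i : Fin M) :
    -(Real.sqrt ((M : ℝ) * ((M : ℝ) - 1)) / M) ≤ lam i := by
  have hM0 : (0:ℝ) < M := by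
    have : 0 < M := lt_of_lt_of_le two_pos hM
    exact_mod_cast this
  have hM1 : (1:ℝ) ≤ (M:ℝ) - 1 := by
    have : (2:ℝ) ≤ (M:ℝ) := by exact_mod_cast hM
    linarith
  set s := Real.sqrt ((M : ℝ) * ((M : ℝ) - 1)) with hs
  have hsnn : 0 < s := Real.sqrt_pos.mpr (by nlinarith)
  have hs2 : s ^ 2 = (M:ℝ) * ((M:ℝ) - 1) := Real.sq_sqrt (by nlinarith)
  have hesum : ∑ j ∈ Finset.univ.erase i, lam j = -lam i := by
    rw [Finset.sum_erase_eq_sub (Finset.mem_univ i), h0]; ring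
  have hesq : ∑ j ∈ Finset.univ.erase i, lam j ^ 2 = 1 - lam i ^ 2 := by
    rw [Finset.sum_erase_eq_sub (Finset.mem_univ i), h1]
  have hcard : ((Finset.univ.erase i).card : ℝ) = (M:ℝ) - 1 := by
    rw [Finset.card_erase_of_mem (Finset.mem_univ i)]
    simp only [Finset.card_univ, Fintype.card_fin]
    have : 1 ≤ M := le_trans one_le_two hM
    push_cast [this]
    ring
  have key := sq_sum_le_card_mul_sum_sq (s := Finset.univ.erase i) (f := lam)
  rw [hesum, hesq, hcard, neg_sq] at key
  -- key : lam i ^ 2 ≤ ((M:ℝ) - 1) * (1 - lam i ^ 2)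
  rw [← neg_div, div_le_iff₀ hM0]
  nlinarith [sq_nonneg (lam i * M + s)]

open Matrix in
/-- The adjusted query point Q̂ = Q + (δ/r)(I/M - Q) + δ Z stays in the spectrahedron
for 0 < δ < r = 1/√(M(M-1)), any Q in the spectrahedron, and any traceless Hermitian Z
with unit Frobenius norm. -/
theorem adjusted_query_point_feasible (M : ℕ) (hM : 2 ≤ M)
    (Q Z : Matrix (Fin M) (Fin M) ℂ)
    (hQ : Q.PosSemidef) (hQtr : Q.trace = 1)
    (hZ : Z.IsHermitian) (hZtr : Z.trace = 0) (hZnorm : frobNorm Z = 1)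
    (δ : ℝ) (hδ0 : 0 < δ)
    (hδr : δ < 1 / Real.sqrt ((M : ℝ) * ((M : ℝ) - 1))) :
    let r : ℝ := 1 / Real.sqrt ((M : ℝ) * ((M : ℝ) - 1))
    let Qhat : Matrix (Fin M) (Fin M) ℂ :=
      Q + (δ / r) • (((M : ℂ))⁻¹ • (1 : Matrix (Fin M) (Fin M) ℂ) - Q) + δ • Z
    Qhat.PosSemidef ∧ Qhat.trace = 1 := by
  intro r Qhat
  have hMpos : 0 < M := lt_of_lt_of_le two_pos hM
  have hM0 : (0:ℝ) < M := by exact_mod_cast hMpos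
  have hM1 : (1:ℝ) ≤ (M:ℝ) - 1 := by
    have : (2:ℝ) ≤ (M:ℝ) := by exact_mod_cast hM
    linarith
  set s := Real.sqrt ((M : ℝ) * ((M : ℝ) - 1)) with hs
  have hspos : 0 < s := Real.sqrt_pos.mpr (by nlinarith)
  have hrpos : 0 < r := by positivity
  set c : ℝ := s / M with hc
  have hcpos : 0 < c := by positivity
  -- spectral setup
  set lam := hZ.eigenvalues with hlam
  set U : Matrix (Fin M) (Fin M) ℂ := (hZ.eigenvectorUnitary : Matrix (Fin M) (Fin M) ℂ) with hUdef
  have hU1 : U * Uᴴ = 1 := by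
    rw [hUdef, ← Matrix.star_eq_conjTranspose]
    exact Matrix.mem_unitaryGroup_iff.mp hZ.eigenvectorUnitary.2
  have hU1' : Uᴴ * U = 1 := by
    rw [hUdef, ← Matrix.star_eq_conjTranspose]
    exact Matrix.mem_unitaryGroup_iff'.mp hZ.eigenvectorUnitary.2
  set D : Matrix (Fin M) (Fin M) ℂ := Matrix.diagonal (fun i => (lam i : ℂ)) with hD
  have hspec : Z = U * D * Uᴴ := by
    rw [hUdef, hD, hlam, ← Matrix.star_eq_conjTranspose]
    simpa [Function.comp_def] using hZ.spectral_theorem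
  -- trace of Z: sum of eigenvalues
  have htrD : Z.trace = ∑ i, (lam i : ℂ) := by
    rw [hspec, Matrix.trace_mul_cycle, hU1', Matrix.one_mul, hD, Matrix.trace_diagonal]
  have hsum0 : ∑ i, lam i = 0 := by
    have : ((∑ i, lam i : ℝ) : ℂ) = 0 := by push_cast; rw [← htrD]; exact hZtr
    exact_mod_cast this
  -- trace of Z^2 : sum of squared eigenvalues = 1
  have htrZZ : (Z * Z).trace = ∑ i, ((lam i : ℂ)) ^ 2 := by
    have hZZ : Z * Z = U * (D * D) * Uᴴ := by
      rw [hspec]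
      have e : U * D * Uᴴ * (U * D * Uᴴ) = U * D * (Uᴴ * U) * (D * Uᴴ) := by
        noncomm_ring
      rw [e, hU1', Matrix.mul_one]
      noncomm_ring
    rw [hZZ, Matrix.trace_mul_cycle, hU1', Matrix.one_mul, hD,
      Matrix.diagonal_mul_diagonal, Matrix.trace_diagonal]
    simp [sq]
  have htrZZ' : (Z * Z).trace = ((∑ i, ∑ j, ‖Z i j‖ ^ 2 : ℝ) : ℂ) := by
    rw [Matrix.trace]
    push_cast
    refine Finset.sum_congr rfl fun i _ => ?_
    simp only [Matrix.diag_apply, Matrix.mul_apply]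
    refine Finset.sum_congr rfl fun j _ => ?_
    have h : Z j i = (starRingEnd ℂ) (Z i j) := by
      have := hZ.apply j i
      simpa using this.symm
    rw [h, Complex.mul_conj, ← Complex.sq_norm]
    norm_cast
  have hfrob : ∑ i, ∑ j, ‖Z i j‖ ^ 2 = 1 := by
    have hnn : 0 ≤ ∑ i, ∑ j, ‖Z i j‖ ^ 2 :=
      Finset.sum_nonneg fun i _ => Finset.sum_nonneg fun j _ => sq_nonneg _
    have h2 := hZnorm
    unfold frobNorm at h2
    nlinarith [Real.sq_sqrt hnn]
  have hsq1 : ∑ i, lam i ^ 2 = 1 := by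
    have : ((∑ i, lam i ^ 2 : ℝ) : ℂ) = 1 := by
      push_cast
      rw [← htrZZ, htrZZ', hfrob]
      norm_num
    exact_mod_cast this
  -- eigenvalue lower bound
  have hlow : ∀ i, 0 ≤ lam i + c := by
    intro i
    have := eig_bound hM lam hsum0 hsq1 i
    rw [hc]
    linarith [this]
  -- PSD of Z + c • 1
  have hNspec : Z + (c : ℂ) • (1 : Matrix (Fin M) (Fin M) ℂ)
      = U * Matrix.diagonal (fun i => ((lam i + c : ℝ) : ℂ)) * Uᴴ := by
    have h1 : (c : ℂ) • (1 : Matrix (Fin M) (Fin M) ℂ) = U * ((c : ℂ) • 1) * Uᴴ := by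
      rw [Matrix.mul_smul, Matrix.mul_one, Matrix.smul_mul, hU1]
    rw [hspec]
    nth_rewrite 1 [h1]
    rw [← Matrix.add_mul, ← Matrix.mul_add]
    congr 2
    rw [hD, Matrix.smul_one_eq_diagonal, Matrix.diagonal_add]
    congr 1
    ext i
    push_cast
    ring
  have hN : (Z + (c : ℂ) • (1 : Matrix (Fin M) (Fin M) ℂ)).PosSemidef := by
    rw [hNspec]
    refine (Matrix.posSemidef_diagonal_iff.mpr fun i => ?_).mul_mul_conjTranspose_same U
    exact_mod_cast Complex.zero_le_real.mpr (hlow i)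
  -- decomposition
  have hdecomp : Qhat = (((1 - δ / r : ℝ)) : ℂ) • Q
      + ((δ : ℝ) : ℂ) • (Z + (c : ℂ) • (1 : Matrix (Fin M) (Fin M) ℂ)) := by
    have hcoef : (δ / r) * ((M : ℝ))⁻¹ = δ * c := by
      have hr' : r = 1 / s := rfl
      rw [hc, hr']
      rw [div_div_eq_mul_div, div_one, div_eq_mul_inv]
      ring
    have hkey : ((δ : ℂ) / (r : ℂ)) * (((M : ℕ) : ℂ))⁻¹ = (δ : ℂ) * (c : ℂ) := by
      have h2 := congrArg (fun x : ℝ => (x : ℂ)) hcoef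
      push_cast at h2
      exact h2
    show Q + (δ / r) • (((M : ℂ))⁻¹ • (1 : Matrix (Fin M) (Fin M) ℂ) - Q) + δ • Z = _
    ext i j
    simp only [Matrix.add_apply, Matrix.smul_apply, Matrix.sub_apply, Matrix.one_apply,
      smul_eq_mul, Complex.real_smul]
    by_cases h : i = j
    · simp only [h, if_pos rfl]
      push_cast
      linear_combination hkey
    · simp only [h, if_neg h]
      push_cast
      ring
  constructor
  · rw [hdecomp]
    have h1 : (0:ℝ) ≤ 1 - δ / r := by
      have : δ / r < 1 := (div_lt_one hrpos).mpr hδr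
      linarith
    exact (psd_csmul hQ h1).add (psd_csmul hN hδ0.le)
  · rw [hdecomp, Matrix.trace_add, Matrix.trace_smul, Matrix.trace_smul, Matrix.trace_add,
      Matrix.trace_smul, hQtr, hZtr, Matrix.trace_one]
    simp only [Fintype.card_fin, smul_eq_mul]
    have hMne : (M:ℝ) ≠ 0 := ne_of_gt hM0
    have : (1 - δ / r) * 1 + δ * (0 + c * M) = 1 := by
      rw [hc]
      have hr' : r = 1 / s := rfl
      rw [hr']
      field_simp
      ring
    calc (((1 - δ / r : ℝ)) : ℂ) * 1 + ((δ:ℝ) : ℂ) * (0 + (c:ℂ) * (M:ℕ)) 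
        = (((1 - δ / r) * 1 + δ * (0 + c * M) : ℝ) : ℂ) := by push_cast; ring
      _ = 1 := by rw [this]; norm_num
end

section
/- Let a, b, c, h > 0 and d ≥ 0, let Γ = {(γ, δ) : γ > 0, δ > 0, γ < hδ}, and define f(γ, δ) = a/γ + 2bδ + cγ·(h - γ/δ)^{-2} + d·(h - γ/δ)^{-1} on Γ. Then at the point (γ*, δ*) with γ* = h·[√(c/a) + √( √(c/a)·(2bh)/(2√(ac)+d) )]^{-1} and δ* = √( √(a/c)·(2√(ac)+d)/(2bh) ), the value of f is f(γ*, δ*) = (2√(ac)+d)/h + 2√( 2b·√(a/c)·(2√(ac)+d)/h ). -/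
/-- Closed-form value of `f(γ,δ) = a/γ + 2bδ + cγ(h-γ/δ)⁻² + d(h-γ/δ)⁻¹` at the optimizer
`(γ*, δ*)` on the cone `Γ = {(γ,δ) : γ > 0, δ > 0, γ < hδ}`. -/
theorem optimal_policy_value (a b c h d : ℝ) (ha : 0 < a) (hb : 0 < b) (hc : 0 < c)
    (hh : 0 < h) (hd : 0 ≤ d) :
    let γs : ℝ := h * (Real.sqrt (c / a) +
      Real.sqrt (Real.sqrt (c / a) * (2 * b * h) / (2 * Real.sqrt (a * c) + d)))⁻¹
    let δs : ℝ := Real.sqrt (Real.sqrt (a / c) * (2 * Real.sqrt (a * c) + d) / (2 * b * h))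
    (0 < γs ∧ 0 < δs ∧ γs < h * δs) ∧
    a / γs + 2 * b * δs + c * γs / (h - γs / δs) ^ 2 + d / (h - γs / δs)
      = (2 * Real.sqrt (a * c) + d) / h +
        2 * Real.sqrt (2 * b * Real.sqrt (a / c) * ((2 * Real.sqrt (a * c) + d) / h)) := by
  intro γs δs
  set s := Real.sqrt (c / a) with hs_def
  set t := Real.sqrt (a / c) with ht_def
  have hs : 0 < s := Real.sqrt_pos.mpr (by positivity)
  have ht : 0 < t := Real.sqrt_pos.mpr (by positivity)
  have hs2 : s ^ 2 = c / a := Real.sq_sqrt (by positivity)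
  have ht2 : t ^ 2 = a / c := Real.sq_sqrt (by positivity)
  have hst : s * t = 1 := by
    rw [hs_def, ht_def, ← Real.sqrt_mul (by positivity)]
    rw [show c / a * (a / c) = 1 by field_simp]
    exact Real.sqrt_one
  have hsac : Real.sqrt (a * c) = a * s := by
    rw [show a * c = (a * s) ^ 2 by rw [mul_pow, hs2]; field_simp]
    exact Real.sqrt_sq (by positivity)
  set K := 2 * Real.sqrt (a * c) + d with hK_def
  have hK : 0 < K := by rw [hK_def, hsac]; positivity
  have hδ : 0 < δs := Real.sqrt_pos.mpr (by positivity)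
  have hδ2 : δs ^ 2 = t * K / (2 * b * h) := Real.sq_sqrt (by positivity)
  have hcon : 2 * b * h * s * δs ^ 2 = K := by
    rw [hδ2]; field_simp; linear_combination hst
  have hinv : Real.sqrt (s * (2 * b * h) / K) = 1 / δs := by
    rw [show s * (2 * b * h) / K = (1 / δs) ^ 2 by
      rw [div_pow, one_pow, hδ2]
      rw [eq_div_iff (by positivity)]
      field_simp
      linear_combination hst]
    exact Real.sqrt_sq (by positivity)
  have hγ : γs = h * δs / (s * δs + 1) := by
    show h * (s + Real.sqrt (s * (2 * b * h) / K))⁻¹ = _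
    rw [hinv]
    field_simp
  have hden : 0 < s * δs + 1 := by positivity
  have hγpos : 0 < γs := by rw [hγ]; positivity
  have hlt : γs < h * δs := by
    rw [hγ, div_lt_iff₀ hden]
    nlinarith [mul_pos hs hδ, mul_pos hh hδ]
  have hgap : h - γs / δs = h * s * δs / (s * δs + 1) := by
    rw [hγ]; field_simp; ring
  have hR : Real.sqrt (2 * b * t * (K / h)) = 2 * b * δs := by
    rw [show 2 * b * t * (K / h) = (2 * b * δs) ^ 2 by
      rw [mul_pow, hδ2]; field_simp]
    exact Real.sqrt_sq (by positivity)
  refine ⟨⟨hγpos, hδ, hlt⟩, ?_⟩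
  rw [hR, hgap, hγ]
  have hc' : c = a * s ^ 2 := by rw [hs2]; field_simp
  rw [hc']
  have hδne : δs ≠ 0 := ne_of_gt hδ
  have hdne : s * δs + 1 ≠ 0 := ne_of_gt hden
  have hK1 : K = 2 * a * s + d := by rw [hK_def, hsac]; ring
  field_simp
  have hd' : d = 2*b*h*s*δs^2 - 2*a*s := by linarith [hcon, hK1]
  rw [hK1, hd']
  ring
end
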